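/- Let β > 0 and let (a_i)_{i≥1} and (Δ_i)_{i≥1} be sequences of nonnegative real numbers satisfying β·a_{i+1}² ≤ Δ_i·a_i for every i ≥ 1. Then for every N ≥ 1: Σ_{i=1}^{N} a_{i+1} ≤ (1/β)·Σ_{i=1}^{N} Δ_i + a_1. In particular, if Σ_{i=1}^{∞} Δ_i < ∞, then Σ_{i=1}^{∞} a_i < ∞. -/

import Mathlib

theorem stmt13 (β : ℝ) (hβ : 0 < β) (a Δ : ℕ → ℝ)
    (ha : ∀ i ≥ 1, 0 ≤ a i) (hΔ : ∀ i ≥ 1, 0 ≤ Δ i)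
    (hrec : ∀ i ≥ 1, β * a (i + 1) ^ 2 ≤ Δ i * a i) :
    (∀ N ≥ 1, ∑ i ∈ Finset.Icc 1 N, a (i + 1) ≤
      (1 / β) * ∑ i ∈ Finset.Icc 1 N, Δ i + a 1) ∧
    (Summable (fun i => Δ (i + 1)) → Summable (fun i => a (i + 1))) := by
  -- pointwise: 2 a(i+1) ≤ Δ i / β + a i
  have key : ∀ i ≥ 1, 2 * a (i + 1) ≤ 1 / β * Δ i + a i := by
    intro i hi
    have h1 := hrec i hi
    have h2 := ha i hi
    have h3 := ha (i + 1) (by omega)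
    have h4 := hΔ i hi
    rw [← mul_le_mul_iff_right₀ hβ]
    have heq : β * (1 / β * Δ i + a i) = Δ i + β * a i := by field_simp
    rw [heq]
    have h7 : (2 * β * a (i + 1)) ^ 2 ≤ (Δ i + β * a i) ^ 2 := by
      nlinarith [sq_nonneg (Δ i - β * a i), mul_le_mul_of_nonneg_left h1 (by positivity : (0:ℝ) ≤ 4 * β)]
    rcases eq_or_lt_of_le h3 with h8 | h8
    · have : β * (2 * a (i + 1)) = 0 := by rw [← h8]; ring
      rw [this]
      positivity
    · nlinarith [mul_nonneg hβ.le h2, mul_pos hβ h8]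
  -- stronger bound by induction
  have main : ∀ N ≥ 1, ∑ i ∈ Finset.Icc 1 N, a (i + 1) + a (N + 1) ≤
      (1 / β) * ∑ i ∈ Finset.Icc 1 N, Δ i + a 1 := by
    intro N hN
    induction N with
    | zero => omega
    | succ n ih =>
      rcases Nat.eq_or_lt_of_le hN with h | h
      · obtain rfl : n = 0 := by omega
        rw [Finset.Icc_self, Finset.sum_singleton, Finset.sum_singleton]
        linarith [key 1 le_rfl]
      · have hn : 1 ≤ n := by omega
        have hIH := ih hn
        have hk := key (n + 1) (by omega)
        rw [Finset.sum_Icc_succ_top (by omega : 1 ≤ n + 1),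
            Finset.sum_Icc_succ_top (by omega : 1 ≤ n + 1), mul_add]
        linarith
  have part1 : ∀ N ≥ 1, ∑ i ∈ Finset.Icc 1 N, a (i + 1) ≤
      (1 / β) * ∑ i ∈ Finset.Icc 1 N, Δ i + a 1 := by
    intro N hN
    have := main N hN
    have := ha (N + 1) (by omega)
    linarith
  refine ⟨part1, fun hS => ?_⟩
  -- Summability
  have hpos : ∀ i : ℕ, 0 ≤ a (i + 1) := fun i => ha (i + 1) (by omega)
  have hΔpos : ∀ i : ℕ, 0 ≤ Δ (i + 1) := fun i => hΔ (i + 1) (by omega)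
  have hshift : ∀ (f : ℕ → ℝ) (m : ℕ), ∑ i ∈ Finset.Icc 1 m, f i = ∑ i ∈ Finset.range m, f (i + 1) := by
    intro f m
    induction m with
    | zero => simp
    | succ k ih => rw [Finset.sum_Icc_succ_top (by omega : 1 ≤ k + 1), Finset.sum_range_succ, ih]
  apply summable_of_sum_range_le (c := 2 * a 1 + (1 / β) * ∑' i, Δ (i + 1)) hpos
  intro n
  have htsum : ∀ m : ℕ, ∑ i ∈ Finset.range m, Δ (i + 1) ≤ ∑' i, Δ (i + 1) :=
    fun m => Summable.sum_le_tsum _ (fun i _ => hΔpos i) hS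
  rcases Nat.eq_zero_or_pos n with h | h
  · subst h
    simp only [Finset.range_zero, Finset.sum_empty]
    have := ha 1 le_rfl
    have h0 : 0 ≤ ∑' i, Δ (i + 1) := tsum_nonneg hΔpos
    positivity
  · obtain ⟨m, rfl⟩ := Nat.exists_eq_add_of_lt h
    rw [show 0 + m + 1 = m + 1 by ring]
    have hsum : ∑ i ∈ Finset.range (m + 1), a (i + 1)
        = a 1 + ∑ i ∈ Finset.Icc 1 m, a (i + 1) := by
      rw [Finset.sum_range_succ']
      rw [hshift (fun i => a (i + 1)) m]
      ring
    rw [hsum]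
    rcases Nat.eq_zero_or_pos m with hm | hm
    · subst hm
      simp only [Finset.Icc_eq_empty (by omega : ¬(1:ℕ) ≤ 0), Finset.sum_empty, add_zero]
      have := ha 1 le_rfl
      have h0 : 0 ≤ ∑' i, Δ (i + 1) := tsum_nonneg hΔpos
      have : 0 ≤ (1 / β) * ∑' i, Δ (i + 1) := by positivity
      linarith
    · have hp := part1 m hm
      have hle : ∑ i ∈ Finset.Icc 1 m, Δ i ≤ ∑' i, Δ (i + 1) := by
        rw [hshift Δ m]; exact htsum m
      have hb : (1 / β) * ∑ i ∈ Finset.Icc 1 m, Δ i ≤ (1 / β) * ∑' i, Δ (i + 1) := by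
        apply mul_le_mul_of_nonneg_left hle (by positivity)
      linarith
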